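/- Let C be a binary linear code of length n = 2^m - 1 (m even, m > 2) with minimum distance d = 10, whose coordinates are partitioned into n/3 disjoint triples each supporting a weight-3 dual codeword. Then the dimension k of C satisfies k ≤ (2/3)(2^m - 1) - 2m + 1, and if k is even then k ≤ (2/3)(2^m - 1) - 2m. -/

import Mathlib

/-- Dimension bound for binary codes of length `2^m - 1`, distance `10`,
locality `2` with disjoint repair groups: `k ≤ (2/3)(2^m - 1) - 2m + 1`, and
`k ≤ (2/3)(2^m - 1) - 2m` when `k` is even. -/
theorem dimension_bound_d10_disjoint_groups
    (m : ℕ) (hm : Even m) (hm2 : 2 < m)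
    (C : Submodule (ZMod 2) (Fin (2 ^ m - 1) → ZMod 2))
    -- minimum distance is `10`
    (hd : ∀ c ∈ C, c ≠ 0 → 10 ≤ hammingNorm c)
    (hd' : ∃ c ∈ C, c ≠ 0 ∧ hammingNorm c = 10)
    -- disjoint repair groups
    (P : Finset (Finset (Fin (2 ^ m - 1))))
    (hcard : P.card = (2 ^ m - 1) / 3)
    (hsize : ∀ g ∈ P, g.card = 3)
    (hdisj : (P : Set (Finset (Fin (2 ^ m - 1)))).PairwiseDisjoint id)
    (hcover : ∀ i : Fin (2 ^ m - 1), ∃ g ∈ P, i ∈ g)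
    (hchecks : ∀ g ∈ P, ∃ y : Fin (2 ^ m - 1) → ZMod 2,
        (∀ x ∈ C, ∑ j, x j * y j = 0) ∧ (∀ i, y i ≠ 0 ↔ i ∈ g)) :
    Module.finrank (ZMod 2) C ≤ 2 * (2 ^ m - 1) / 3 - 2 * m + 1 ∧
    (Even (Module.finrank (ZMod 2) C) →
      Module.finrank (ZMod 2) C ≤ 2 * (2 ^ m - 1) / 3 - 2 * m) := by
  classical
  obtain ⟨t, ht⟩ := hm
  have hm4 : 4 ≤ m := by omega
  have hN : 16 ≤ 2 ^ m := by
    calc (16 : ℕ) = 2 ^ 4 := by norm_num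
    _ ≤ 2 ^ m := Nat.pow_le_pow_right (by norm_num) hm4
  have h3 : 3 ∣ 2 ^ m - 1 := by
    have h24 : (2 : ℕ) ^ m = 4 ^ t := by rw [ht, ← two_mul, pow_mul]; norm_num
    have h4 : (4 : ℕ) ^ t ≡ 1 ^ t [MOD 3] := Nat.ModEq.pow t (by decide)
    have h1 : 1 ≤ (4 : ℕ) ^ t := Nat.one_le_pow _ _ (by norm_num)
    rw [h24]
    exact (Nat.modEq_iff_dvd' h1).mp (by simpa using h4.symm)
  set ν : ℕ := (2 ^ m - 1) / 3 with hν
  have hν3 : 3 * ν = 2 ^ m - 1 := Nat.mul_div_cancel' h3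
  have hν5 : 5 ≤ ν := by omega
  set k := Module.finrank (ZMod 2) C with hk
  -- every codeword sums to zero on every group
  have hone : ∀ a : ZMod 2, a ≠ 0 → a = 1 := by decide
  have hgsum : ∀ x ∈ C, ∀ g ∈ P, ∑ i ∈ g, x i = 0 := by
    intro x hx g hg
    obtain ⟨y, hy1, hy2⟩ := hchecks g hg
    have h0 := hy1 x hx
    calc ∑ i ∈ g, x i = ∑ i ∈ g, x i * y i :=
          Finset.sum_congr rfl fun i hi => by
            rw [hone (y i) ((hy2 i).mpr hi), mul_one]
    _ = ∑ j, x j * y j := by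
          apply Finset.sum_subset (Finset.subset_univ g)
          intro i _ hi
          have hyi : y i = 0 := by
            by_contra h; exact hi ((hy2 i).mp h)
          rw [hyi, mul_zero]
    _ = 0 := h0
  -- parity: the weight of a codeword on a group is even
  have hpar : ∀ x ∈ C, ∀ g ∈ P, Even ((g.filter fun i => x i ≠ 0).card) := by
    intro x hx g hg
    have h1 : ∑ i ∈ g, x i = 0 := hgsum x hx g hg
    have h2 : ∑ i ∈ g, x i = ((g.filter fun i => x i ≠ 0).card : ZMod 2) := by
      rw [← Finset.sum_filter_of_ne (fun i _ h => h)]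
      rw [Finset.sum_congr rfl fun i hi => hone (x i) (Finset.mem_filter.mp hi).2]
      simp [Finset.sum_const]
    rw [h1] at h2
    obtain ⟨c, hc⟩ := (ZMod.natCast_eq_zero_iff _ 2).mp h2.symm
    exact ⟨c, by omega⟩
  -- choose the three elements of each group
  have hchoice : ∀ g : {g // g ∈ P}, ∃ a b c : Fin (2 ^ m - 1),
      a ≠ b ∧ a ≠ c ∧ b ≠ c ∧ (g : Finset (Fin (2 ^ m - 1))) = {a, b, c} :=
    fun g => Finset.card_eq_three.mp (hsize g g.2)
  choose A B Cc hab hac hbc hG using hchoice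
  set F := ZMod 2 × ZMod 2 with hF
  set Φ : (Fin (2 ^ m - 1) → ZMod 2) → ({g // g ∈ P} → F) :=
    fun x g => (x (A g), x (B g)) with hΦ
  have htriple : ∀ u v w : ZMod 2, u + (v + w) = 0 → w = u + v := by decide
  have hCc : ∀ x ∈ C, ∀ g : {g // g ∈ P}, x (Cc g) = x (A g) + x (B g) := by
    intro x hx g
    have h1 : ∑ i ∈ (g : Finset (Fin (2 ^ m - 1))), x i = 0 := hgsum x hx g g.2
    rw [hG g] at h1
    rw [Finset.sum_insert (by simp [hab g, hac g]),
        Finset.sum_insert (by simp [hbc g]), Finset.sum_singleton] at h1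
    exact htriple _ _ _ h1
  -- key distance bound for the contracted code
  have key : ∀ x ∈ C, ∀ x' ∈ C, x ≠ x' → 5 ≤ hammingDist (Φ x) (Φ x') := by
    intro x hx x' hx' hne
    set z := x - x' with hz
    have hzC : z ∈ C := sub_mem hx hx'
    have hz0 : z ≠ 0 := sub_ne_zero.mpr hne
    have h10 : 10 ≤ hammingNorm z := hd z hzC hz0
    have hU : (Finset.univ : Finset (Fin (2 ^ m - 1))) = P.biUnion id := by
      ext i; simpa using hcover i
    have hsplit : hammingNorm z = ∑ g ∈ P, ((g.filter fun i => z i ≠ 0).card) := by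
      have h1 : hammingNorm z = ∑ i, if z i ≠ 0 then 1 else 0 :=
        Finset.card_filter _ _
      rw [h1, hU, Finset.sum_biUnion hdisj]
      exact Finset.sum_congr rfl fun g _ => (Finset.card_filter _ _).symm
    have hwle : ∀ g ∈ P, ((g.filter fun i => z i ≠ 0).card) ≤ 2 := by
      intro g hg
      have he := hpar z hzC g hg
      have h3' : ((g.filter fun i => z i ≠ 0).card) ≤ 3 :=
        le_trans (Finset.card_filter_le _ _) (le_of_eq (hsize g hg))
      obtain ⟨r, hr⟩ := he; omega
    have hdistle : ∑ g ∈ P, ((g.filter fun i => z i ≠ 0).card)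
        ≤ 2 * hammingDist (Φ x) (Φ x') := by
      rw [← Finset.sum_attach P fun g => ((g.filter fun i => z i ≠ 0).card)]
      have hD : hammingDist (Φ x) (Φ x')
          = ∑ g : {g // g ∈ P}, if Φ x g ≠ Φ x' g then 1 else 0 := by
        simp only [hammingDist]
        exact Finset.card_filter _ _
      rw [hD, Finset.mul_sum, Finset.attach_eq_univ]
      apply Finset.sum_le_sum
      intro g _
      by_cases hgd : Φ x g ≠ Φ x' g
      · rw [if_pos hgd]
        have := hwle g g.2; omega
      · rw [if_neg hgd]
        push_neg at hgd
        have hA : z (A g) = 0 := by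
          have h1 := congrArg Prod.fst hgd
          simp only [hΦ] at h1
          simp [hz, Pi.sub_apply, sub_eq_zero, h1]
        have hB : z (B g) = 0 := by
          have h1 := congrArg Prod.snd hgd
          simp only [hΦ] at h1
          simp [hz, Pi.sub_apply, sub_eq_zero, h1]
        have hCz : z (Cc g) = 0 := by rw [hCc z hzC g, hA, hB, add_zero]
        have hempty : ((g : Finset (Fin (2 ^ m - 1))).filter fun i => z i ≠ 0) = ∅ := by
          apply Finset.filter_eq_empty_iff.mpr
          intro i hi
          rw [hG g] at hi
          simp only [Finset.mem_insert, Finset.mem_singleton] at hi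
          rcases hi with rfl | rfl | rfl
          · simp [hA]
          · simp [hB]
          · simp [hCz]
        simp [hempty]
    rw [hsplit] at h10
    omega
  -- the packing argument
  haveI : Fintype C := Fintype.ofFinite _
  have hcardC : Fintype.card C = 2 ^ k := by
    have h := Module.card_eq_pow_finrank (K := ZMod 2) (V := C)
    simpa [ZMod.card] using h
  have hcardγ : Fintype.card {g // g ∈ P} = ν := by
    rw [Fintype.card_coe, hcard]
  have hpack : Fintype.card C * Fintype.card {w : {g // g ∈ P} → F // hammingNorm w ≤ 2}
      ≤ 4 ^ ν := by
    have hinj : Function.Injective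
        (fun p : C × {w : {g // g ∈ P} → F // hammingNorm w ≤ 2} =>
          Φ (p.1 : Fin (2 ^ m - 1) → ZMod 2) + (p.2 : {g // g ∈ P} → F)) := by
      rintro ⟨⟨x, hx⟩, ⟨w, hw⟩⟩ ⟨⟨x', hx'⟩, ⟨w', hw'⟩⟩ h
      simp only at h
      by_cases hxx : x = x'
      · subst hxx
        have hww : w = w' := by
          exact add_left_cancel h
        simp [hww]
      · exfalso
        have h5 := key x hx x' hx' hxx
        have hsub : Φ x - Φ x' = w' - w := by
          rw [sub_eq_sub_iff_add_eq_add]; exact h.trans (add_comm _ _)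
        have hle : hammingDist (Φ x) (Φ x') ≤ 4 := by
          calc hammingDist (Φ x) (Φ x') = hammingNorm (Φ x - Φ x') :=
                by rw [hammingDist_comm, hammingDist_eq_hammingNorm, neg_add_eq_sub]
          _ = hammingNorm (w' - w) := by rw [hsub]
          _ = hammingDist w' w := by rw [hammingDist_comm, hammingDist_eq_hammingNorm, neg_add_eq_sub]
          _ ≤ hammingDist w' 0 + hammingDist 0 w :=
                hammingDist_triangle _ _ _
          _ ≤ 4 := by
                rw [hammingDist_zero_right, hammingDist_zero_left]
                omega
        omega
    calc Fintype.card C * Fintype.card {w : {g // g ∈ P} → F // hammingNorm w ≤ 2}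
        = Fintype.card (C × {w : {g // g ∈ P} → F // hammingNorm w ≤ 2}) :=
          (Fintype.card_prod _ _).symm
    _ ≤ Fintype.card ({g // g ∈ P} → F) := Fintype.card_le_of_injective _ hinj
    _ = 4 ^ ν := by
          rw [Fintype.card_fun, hcardγ]
          norm_num [hF]
  -- lower bound for the ball cardinality
  have hball : 9 * ν.choose 2
      ≤ Fintype.card {w : {g // g ∈ P} → F // hammingNorm w ≤ 2} := by
    rw [Fintype.card_subtype]
    set S2 := Finset.powersetCard 2 (Finset.univ : Finset {g // g ∈ P}) with hS2
    set fs : Finset {g // g ∈ P} → Finset ({g // g ∈ P} → F) :=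
      fun s => Finset.univ.filter fun w => ∀ g, w g ≠ 0 ↔ g ∈ s with hfs
    have hsubset : S2.biUnion fs ⊆ Finset.univ.filter fun w => hammingNorm w ≤ 2 := by
      intro w hw
      rw [Finset.mem_biUnion] at hw
      obtain ⟨s, hs, hws⟩ := hw
      rw [Finset.mem_filter] at hws ⊢
      refine ⟨Finset.mem_univ _, ?_⟩
      have hcard2 : s.card = 2 := (Finset.mem_powersetCard.mp hs).2
      have hsupp : (Finset.univ.filter fun g => w g ≠ 0) ⊆ s := by
        intro g hg
        rw [Finset.mem_filter] at hg
        exact (hws.2 g).mp hg.2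
      calc hammingNorm w = (Finset.univ.filter fun g => w g ≠ 0).card := rfl
      _ ≤ s.card := Finset.card_le_card hsupp
      _ = 2 := hcard2
    have hdisj2 : ∀ s ∈ (S2 : Finset (Finset {g // g ∈ P})), ∀ s' ∈ S2, s ≠ s' →
        Disjoint (fs s) (fs s') := by
      intro s _ s' _ hss
      rw [Finset.disjoint_left]
      intro w hws hws'
      rw [Finset.mem_filter] at hws hws'
      exact hss (Finset.ext fun g => by rw [← hws.2 g, hws'.2 g])
    have hcard9 : ∀ s ∈ S2, 9 ≤ (fs s).card := by
      intro s hs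
      obtain ⟨g, h, hgh, rfl⟩ := Finset.card_eq_two.mp (Finset.mem_powersetCard.mp hs).2
      set ι : {a : F // a ≠ 0} × {a : F // a ≠ 0} → ({g // g ∈ P} → F) :=
        fun p u => if u = g then p.1.1 else if u = h then p.2.1 else 0 with hι
      have hmem : ∀ p, ι p ∈ fs {g, h} := by
        intro p
        rw [hfs, Finset.mem_filter]
        refine ⟨Finset.mem_univ _, fun u => ?_⟩
        by_cases hug : u = g
        · subst hug; simp [hι, p.1.2]
        · by_cases huh : u = h
          · subst huh; simp [hι, hug, p.2.2]
          · simp [hι, hug, huh]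
      have hinj : Function.Injective fun p => (⟨ι p, hmem p⟩ : {w // w ∈ fs {g, h}}) := by
        intro p q hpq
        have h1 : ι p = ι q := congrArg Subtype.val hpq
        have hg1 : p.1 = q.1 := by
          have := congrFun h1 g
          simp only [hι, if_pos rfl] at this
          exact Subtype.ext this
        have hg2 : p.2 = q.2 := by
          have := congrFun h1 h
          have hhg : h ≠ g := fun hh => hgh hh.symm
          simp only [hι, if_neg hhg, if_pos rfl] at this
          exact Subtype.ext this
        exact Prod.ext hg1 hg2
      calc (9 : ℕ) = Fintype.card ({a : F // a ≠ 0} × {a : F // a ≠ 0}) := by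
            rw [Fintype.card_prod]
            norm_num [hF, Fintype.card_subtype]
            decide
      _ ≤ Fintype.card {w // w ∈ fs {g, h}} := Fintype.card_le_of_injective _ hinj
      _ = (fs {g, h}).card := Fintype.card_coe _
    calc 9 * ν.choose 2 = ∑ _s ∈ S2, 9 := by
          rw [Finset.sum_const, hS2, Finset.card_powersetCard, Finset.card_univ, hcardγ,
            smul_eq_mul, mul_comm]
    _ ≤ ∑ s ∈ S2, (fs s).card := Finset.sum_le_sum hcard9
    _ = (S2.biUnion fs).card := (Finset.card_biUnion hdisj2).symm
    _ ≤ (Finset.univ.filter fun w : {g // g ∈ P} → F => hammingNorm w ≤ 2).card :=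
          Finset.card_le_card hsubset
  -- put everything together
  have hbig : 2 ^ k * (9 * ν.choose 2) ≤ 2 ^ (2 * ν) := by
    calc 2 ^ k * (9 * ν.choose 2)
        ≤ 2 ^ k * Fintype.card {w : {g // g ∈ P} → F // hammingNorm w ≤ 2} :=
          Nat.mul_le_mul_left _ hball
    _ = Fintype.card C * Fintype.card {w : {g // g ∈ P} → F // hammingNorm w ≤ 2} := by
          rw [hcardC]
    _ ≤ 4 ^ ν := hpack
    _ = 2 ^ (2 * ν) := by rw [pow_mul]; norm_num
  have hlow : 2 ^ (2 * m - 2) < 9 * ν.choose 2 := by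
    have hch : ν.choose 2 * 2 = ν * (ν - 1) := by
      rw [Nat.choose_two_right]
      apply Nat.div_mul_cancel
      obtain ⟨w, hw⟩ : ∃ w, ν = w + 5 := ⟨ν - 5, by omega⟩
      have : Even ((w + 4) * (w + 5)) := Nat.even_mul_succ_self (w + 4)
      rw [hw]
      simpa [mul_comm] using this.two_dvd
    have hNN : 2 ^ (2 * m - 2) * 4 = 2 ^ m * 2 ^ m := by
      rw [show (4 : ℕ) = 2 ^ 2 by norm_num, ← pow_add,
        show 2 * m - 2 + 2 = 2 * m by omega, two_mul, pow_add]
    have hNe : (2 : ℕ) ^ m = 3 * ν + 1 := by omega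
    have hmain : 2 ^ m * 2 ^ m < 18 * (ν * (ν - 1)) := by
      obtain ⟨w, hw⟩ : ∃ w, ν = w + 5 := ⟨ν - 5, by omega⟩
      rw [hNe, hw]
      have h1 : w + 5 - 1 = w + 4 := by omega
      rw [h1]
      nlinarith [sq_nonneg w]
    have h4 : 2 ^ (2 * m - 2) * 4 < (9 * ν.choose 2) * 4 := by
      rw [hNN]
      calc 2 ^ m * 2 ^ m < 18 * (ν * (ν - 1)) := hmain
      _ = 9 * ν.choose 2 * 4 := by rw [← hch]; ring
    exact Nat.lt_of_mul_lt_mul_right h4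
  have hfin : k + (2 * m - 2) < 2 * ν := by
    have h1 : 2 ^ (k + (2 * m - 2)) < 2 ^ (2 * ν) := by
      calc 2 ^ (k + (2 * m - 2)) = 2 ^ k * 2 ^ (2 * m - 2) := pow_add 2 k _
      _ < 2 ^ k * (9 * ν.choose 2) :=
          (Nat.mul_lt_mul_left (Nat.two_pow_pos k)).mpr hlow
      _ ≤ 2 ^ (2 * ν) := hbig
    exact (Nat.pow_lt_pow_iff_right (by norm_num)).mp h1
  have hgoal : 2 * (2 ^ m - 1) / 3 = 2 * ν := Nat.mul_div_assoc 2 h3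
  rw [hgoal]
  constructor
  · omega
  · intro hkeven
    obtain ⟨r, hr⟩ := hkeven
    omega
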